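/- If δ = F_1,...,F_m is a shelling of a (not necessarily pure) simplicial complex Δ, then there exists a shelling δ' = F_{i_1},...,F_{i_m} of Δ such that dim F_{i_k} ≥ dim F_{i_{k+1}} for all k, and moreover the restriction sets agree: R_δ(F) = R_{δ'}(F) for every facet F of Δ. (Rearrangement Lemma of Björner and Wachs.) -/

import Mathlib

attribute [local instance] Classical.propDecidable

abbrev Mon (n : ℕ) := Fin n →₀ ℕ

def mdeg {n : ℕ} (u : Mon n) : ℕ := u.sum fun _ e => e

/-- `mcolon u v` is the exponent vector of `u : v = u / gcd(u,v)`. -/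
noncomputable def mcolon {n : ℕ} (u v : Mon n) : Mon n := u - v

def IsAdmissible {n : ℕ} (L : List (Mon n)) : Prop :=
  ∀ i (hi : i < L.length), ∀ j (hj : j < i), ∃ k, ∃ hk : k < i,
    mdeg (mcolon (L[k]'(hk.trans hi)) (L[i]'hi)) = 1 ∧
    mcolon (L[k]'(hk.trans hi)) (L[i]'hi) ≤
      mcolon (L[j]'(hj.trans hi)) (L[i]'hi)

def LinearQuotientsSet {n : ℕ} (T : Set (Mon n)) : Prop :=
  ∃ L : List (Mon n), L.Nodup ∧ IsAdmissible L ∧ {u | u ∈ L} = T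

def LinearQuotients {n : ℕ} (G : Finset (Mon n)) : Prop :=
  LinearQuotientsSet (↑G : Set (Mon n))

/-- A (non-pure) shelling in the sense of Björner–Wachs: for each `k ≥ 2` the
intersection of `⟨F_k⟩` with `⟨F_1,…,F_{k-1}⟩` is nonempty and pure of dimension
`dim F_k - 1`. -/
def IsShelling {n : ℕ} (L : List (Finset (Fin n))) : Prop :=
  ∀ k (hk : k < L.length), 0 < k →
    (∃ G : Finset (Fin n), G ⊆ L[k]'hk ∧ G.card + 1 = (L[k]'hk).card ∧
      ∃ l, ∃ hl : l < k, G ⊆ L[l]'(hl.trans hk)) ∧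
    (∀ G : Finset (Fin n), G ⊆ L[k]'hk →
      (∃ l, ∃ hl : l < k, G ⊆ L[l]'(hl.trans hk)) →
      ∃ H : Finset (Fin n), G ⊆ H ∧ H ⊆ L[k]'hk ∧ H.card + 1 = (L[k]'hk).card ∧
        ∃ l, ∃ hl : l < k, H ⊆ L[l]'(hl.trans hk))

/-- The restriction set `R_δ(F) = {i ∈ F : F \ {i} ∈ ⟨F_1,…,F_{k-1}⟩}`, where `F` is the
`k`-th facet in the order `δ` given by the list `L`. -/
noncomputable def Rset {n : ℕ} (L : List (Finset (Fin n))) (F : Finset (Fin n)) :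
    Finset (Fin n) :=
  F.filter fun i => ∃ l, ∃ hl : l < L.idxOf F,
    F.erase i ⊆ L[l]'(hl.trans_le L.idxOf_le_length)

/-! ### Auxiliary machinery for the rearrangement lemma -/

theorem SR.exists_take {α : Type*} (L : List α) (k : ℕ) (h : k ≤ L.length) (P : α → Prop) :
    (∃ x ∈ L.take k, P x) ↔ ∃ i, ∃ h : i < k, P (L[i]'(h.trans_le ‹k ≤ L.length›)) := by
  constructor
  · rintro ⟨x, hx, hPx⟩
    obtain ⟨i, hi, rfl⟩ := List.getElem_of_mem hx
    simp only [List.length_take] at hi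
    refine ⟨i, by omega, ?_⟩
    rwa [List.getElem_take] at hPx
  · rintro ⟨i, hi, hP⟩
    refine ⟨L[i], ?_, hP⟩
    rw [List.getElem_take' (by omega) hi]
    exact List.getElem_mem _

/-- The shelling condition for a facet `F` relative to a list `P` of earlier facets. -/
def SR.ShellAt {n : ℕ} (P : List (Finset (Fin n))) (F : Finset (Fin n)) : Prop :=
  (∃ G : Finset (Fin n), G ⊆ F ∧ G.card + 1 = F.card ∧ ∃ F' ∈ P, G ⊆ F') ∧
  (∀ G : Finset (Fin n), G ⊆ F → (∃ F' ∈ P, G ⊆ F') →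
    ∃ H : Finset (Fin n), G ⊆ H ∧ H ⊆ F ∧ H.card + 1 = F.card ∧ ∃ F' ∈ P, H ⊆ F')

theorem SR.shellAt_congr {n : ℕ} {P P' : List (Finset (Fin n))} {F : Finset (Fin n)}
    (h : ∀ x, x ∈ P ↔ x ∈ P') : SR.ShellAt P F ↔ SR.ShellAt P' F := by
  unfold SR.ShellAt
  simp only [h]

theorem SR.isShelling_iff {n : ℕ} (L : List (Finset (Fin n))) :
    IsShelling L ↔ ∀ k (hk : k < L.length), 0 < k → SR.ShellAt (L.take k) (L[k]'hk) := by
  constructor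
  · intro h k hk h0
    obtain ⟨⟨G, hG1, hG2, hG3⟩, hp⟩ := h k hk h0
    constructor
    · exact ⟨G, hG1, hG2, (SR.exists_take L k hk.le _).mpr hG3⟩
    · intro G hG hex
      obtain ⟨H, h1, h2, h3, h4⟩ := hp G hG ((SR.exists_take L k hk.le _).mp hex)
      exact ⟨H, h1, h2, h3, (SR.exists_take L k hk.le _).mpr h4⟩
  · intro h k hk h0
    obtain ⟨⟨G, hG1, hG2, hG3⟩, hp⟩ := h k hk h0
    constructor
    · exact ⟨G, hG1, hG2, (SR.exists_take L k hk.le _).mp hG3⟩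
    · intro G hG hex
      obtain ⟨H, h1, h2, h3, h4⟩ := hp G hG ((SR.exists_take L k hk.le _).mpr hex)
      exact ⟨H, h1, h2, h3, (SR.exists_take L k hk.le _).mp h4⟩

theorem SR.Rset_eq {n : ℕ} (L : List (Finset (Fin n))) (F : Finset (Fin n)) :
    Rset L F = F.filter fun i => ∃ F' ∈ L.take (L.idxOf F), F.erase i ⊆ F' := by
  unfold Rset
  ext a
  simp only [Finset.mem_filter, and_congr_right_iff]
  intro _
  rw [SR.exists_take L _ L.idxOf_le_length]


noncomputable def SR.d {n : ℕ} (F : Finset (Fin n)) : ℕ := n + 1 - F.card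

noncomputable def SR.smeasure {n : ℕ} (L : List (Finset (Fin n))) : ℕ :=
  L.foldl (fun acc F => acc * (n + 2) + SR.d F) 0

theorem SR.foldl_mono {n : ℕ} (l : List (Finset (Fin n))) {a b : ℕ} (h : a < b) :
    l.foldl (fun acc F => acc * (n + 2) + SR.d F) a <
      l.foldl (fun acc F => acc * (n + 2) + SR.d F) b := by
  induction l generalizing a b with
  | nil => exact h
  | cons v t ih =>
    simp only [List.foldl_cons]
    apply ih
    have h2 : (a + 1) * (n + 2) ≤ b * (n + 2) := Nat.mul_le_mul_right _ h
    nlinarith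

theorem SR.card_le {n : ℕ} (F : Finset (Fin n)) : F.card ≤ n := by
  simpa using Finset.card_le_univ F

theorem SR.smeasure_swap {n : ℕ} (A B : List (Finset (Fin n))) {x y : Finset (Fin n)}
    (hxy : x.card < y.card) :
    SR.smeasure (A ++ y :: x :: B) < SR.smeasure (A ++ x :: y :: B) := by
  unfold SR.smeasure
  rw [List.foldl_append, List.foldl_append]
  simp only [List.foldl_cons]
  apply SR.foldl_mono
  have hy : y.card ≤ n := SR.card_le y
  have hdx : SR.d y < SR.d x := by unfold SR.d; omega
  have hdx2 : SR.d x ≤ n + 1 := by unfold SR.d; omega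
  have h2 : (SR.d y + 1) * (n + 2) ≤ SR.d x * (n + 2) :=
    Nat.mul_le_mul_right _ hdx
  nlinarith

theorem SR.exists_inversion {n : ℕ} (L : List (Finset (Fin n)))
    (h : ¬ L.Pairwise (fun F G => G.card ≤ F.card)) :
    ∃ A x y B, L = A ++ x :: y :: B ∧ x.card < y.card := by
  induction L with
  | nil => simp at h
  | cons a t ih =>
    by_cases ht : t.Pairwise (fun F G => G.card ≤ F.card)
    · have h' : ¬ ∀ b ∈ t, b.card ≤ a.card := fun hall => h (List.pairwise_cons.mpr ⟨hall, ht⟩)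
      push_neg at h'
      obtain ⟨b, hb, hab⟩ := h'
      cases t with
      | nil => simp at hb
      | cons c t' =>
        refine ⟨[], a, c, t', by simp, ?_⟩
        by_contra hac
        push_neg at hac
        rcases List.mem_cons.mp hb with rfl | hb'
        · omega
        · rw [List.pairwise_cons] at ht
          have := ht.1 b hb'
          omega
    · obtain ⟨A, x, y, B, heq, hxy⟩ := ih ht
      exact ⟨a :: A, x, y, B, by rw [heq]; rfl, hxy⟩

theorem SR.swap {n : ℕ} {A B : List (Finset (Fin n))} {x y : Finset (Fin n)}
    (hnd : (A ++ x :: y :: B).Nodup)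
    (hanti : ∀ F ∈ A ++ x :: y :: B, ∀ G ∈ A ++ x :: y :: B, F ⊆ G → F = G)
    (h : IsShelling (A ++ x :: y :: B)) (hxy : x.card < y.card) :
    IsShelling (A ++ y :: x :: B) ∧
      ∀ F ∈ A ++ x :: y :: B, Rset (A ++ x :: y :: B) F = Rset (A ++ y :: x :: B) F := by
  set L := A ++ x :: y :: B with hL
  set L2 := A ++ y :: x :: B with hL2
  set la := A.length with hla
  -- nodup facts
  obtain ⟨hndA, hndR, hdisj⟩ := List.nodup_append.mp hnd
  have hxyB : x ∉ y :: B := (List.nodup_cons.mp hndR).1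
  have hndyB : (y :: B).Nodup := (List.nodup_cons.mp hndR).2
  have hyB : y ∉ B := (List.nodup_cons.mp hndyB).1
  have hxny : x ≠ y := fun he => hxyB (he ▸ List.mem_cons_self)
  have hxB : x ∉ B := fun hb => hxyB (List.mem_cons_of_mem _ hb)
  have hxA : x ∉ A := fun ha => hdisj x ha x (by simp) rfl
  have hyA : y ∉ A := fun ha => hdisj y ha y (by simp) rfl
  have hxL : x ∈ L := by simp [hL]
  have hyL : y ∈ L := by simp [hL]
  have hlen : L.length = la + B.length + 2 := by simp [hL]; omega
  have hlen2 : L2.length = la + B.length + 2 := by simp [hL2]; omega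
  -- getElem facts
  have hLx : ∀ (hk : la < L.length), L[la]'hk = x := by
    intro hk
    show (A ++ x :: y :: B)[la]'hk = x
    rw [List.getElem_append_right (le_refl la)]
    simp [← hla]
  have hLy : ∀ (hk : la + 1 < L.length), L[la+1]'hk = y := by
    intro hk
    show (A ++ x :: y :: B)[la+1]'hk = y
    rw [List.getElem_append_right (by omega : la ≤ la + 1)]
    simp [← hla]
  have hL2y : ∀ (hk : la < L2.length), L2[la]'hk = y := by
    intro hk
    show (A ++ y :: x :: B)[la]'hk = y
    rw [List.getElem_append_right (le_refl la)]
    simp [← hla]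
  have hL2x : ∀ (hk : la + 1 < L2.length), L2[la+1]'hk = x := by
    intro hk
    show (A ++ y :: x :: B)[la+1]'hk = x
    rw [List.getElem_append_right (by omega : la ≤ la + 1)]
    simp [← hla]
  -- take facts
  have htakeLow : ∀ k, k ≤ la → L.take k = L2.take k := by
    intro k hk
    rw [hL, hL2, List.take_append, List.take_append]
    have : k - la = 0 := by omega
    rw [this]
    simp
  have htakeLa : L.take la = A := by
    rw [hL, List.take_append]
    simp [← hla]
  have htakeL2a : L2.take la = A := by
    rw [hL2, List.take_append]
    simp [← hla]
  have htakeLx : L.take (la + 1) = A ++ [x] := by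
    rw [hL, List.take_append]
    have h1 : la + 1 - la = 1 := by omega
    rw [h1, List.take_of_length_le (by omega)]
    simp
  have htakeL2y : L2.take (la + 1) = A ++ [y] := by
    rw [hL2, List.take_append]
    have h1 : la + 1 - la = 1 := by omega
    rw [h1, List.take_of_length_le (by omega)]
    simp
  have htake2 : ∀ k, la + 2 ≤ k → ∀ F, (F ∈ L.take k ↔ F ∈ L2.take k) := by
    intro k hk F
    have h1 : L.take k = A ++ x :: y :: B.take (k - la - 2) := by
      rw [hL, List.take_append, List.take_of_length_le (by omega)]
      have h2 : k - la = (k - la - 2) + 1 + 1 := by omega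
      rw [h2, List.take_succ_cons, List.take_succ_cons]
      have h3 : k - la - 2 + 1 + 1 - 2 = k - la - 2 := by omega
      rw [h3]
    have h1' : L2.take k = A ++ y :: x :: B.take (k - la - 2) := by
      rw [hL2, List.take_append, List.take_of_length_le (by omega)]
      have h2 : k - la = (k - la - 2) + 1 + 1 := by omega
      rw [h2, List.take_succ_cons, List.take_succ_cons]
      have h3 : k - la - 2 + 1 + 1 - 2 = k - la - 2 := by omega
      rw [h3]
    rw [h1, h1']
    exact (List.Perm.append_left A (List.Perm.swap x y _)).symm.mem_iff
  have hS := (SR.isShelling_iff L).mp h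
  -- the shelling condition at y in the original list
  have SAy : SR.ShellAt (A ++ [x]) y := by
    have hlt : la + 1 < L.length := by omega
    have := hS (la + 1) hlt (by omega)
    rwa [htakeLx, hLy hlt] at this
  -- key fact: a face of y lying in the complex generated by A ++ [x] already lies in ⟨A⟩
  have key : ∀ G : Finset (Fin n), G ⊆ y → (∃ F' ∈ A ++ [x], G ⊆ F') →
      ∃ F' ∈ A, G ⊆ F' := by
    intro G hGy hex
    obtain ⟨H, hGH, hHy, hHc, F', hF', hHF'⟩ := SAy.2 G hGy hex
    rcases List.mem_append.mp hF' with hFA | hFx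
    · exact ⟨F', hFA, hGH.trans hHF'⟩
    · exfalso
      have hFx' : F' = x := by simpa using hFx
      rw [hFx'] at hHF'
      have hHx : H = x := Finset.eq_of_subset_of_card_le hHF' (by omega)
      have hsub : x ⊆ y := hHx ▸ hHy
      exact hxny (hanti x hxL y hyL hsub)
  have SAy' : SR.ShellAt A y := by
    constructor
    · obtain ⟨G, h1, h2, hex⟩ := SAy.1
      exact ⟨G, h1, h2, key G h1 hex⟩
    · intro G hG hex
      obtain ⟨F0, hF0, hGF0⟩ := hex
      obtain ⟨H, h1, h2, h3, hex'⟩ := SAy.2 G hG ⟨F0, List.mem_append_left _ hF0, hGF0⟩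
      exact ⟨H, h1, h2, h3, key H h2 hex'⟩
  have hAnil : A = [] → False := by
    intro hA
    obtain ⟨G, _, _, F', hF', _⟩ := SAy'.1
    rw [hA] at hF'
    simp at hF'
  have SAx2 : SR.ShellAt (A ++ [y]) x := by
    rcases Nat.eq_zero_or_pos la with hla0 | hla0
    · exact absurd (List.length_eq_zero_iff.mp hla0) (fun hh => hAnil hh)
    · have hlt : la < L.length := by omega
      have SAx : SR.ShellAt A x := by
        have := hS la hlt hla0
        rwa [htakeLa, hLx hlt] at this
      constructor
      · obtain ⟨G, h1, h2, F', hF', h3⟩ := SAx.1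
        exact ⟨G, h1, h2, F', List.mem_append_left _ hF', h3⟩
      · intro G hG hex
        have hexA : ∃ F' ∈ A, G ⊆ F' := by
          obtain ⟨F', hF', hGF'⟩ := hex
          rcases List.mem_append.mp hF' with hFA | hFy
          · exact ⟨F', hFA, hGF'⟩
          · have hFy' : F' = y := by simpa using hFy
            rw [hFy'] at hGF'
            exact key G hGF' ⟨x, List.mem_append_right _ (by simp), hG⟩
        obtain ⟨H, h1, h2, h3, F'', hF'', h4⟩ := SAx.2 G hG hexA
        exact ⟨H, h1, h2, h3, F'', List.mem_append_left _ hF'', h4⟩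
  constructor
  · -- the swapped list is a shelling
    rw [SR.isShelling_iff]
    intro k hk h0
    have hk' : k < L.length := by omega
    by_cases hc1 : k < la
    · have e1 : L2[k]'hk = L[k]'hk' := by
        show (A ++ y :: x :: B)[k]'hk = (A ++ x :: y :: B)[k]'hk'
        rw [List.getElem_append_left (by omega), List.getElem_append_left (by omega)]
      have e2 : L2.take k = L.take k := (htakeLow k (by omega)).symm
      rw [e1, e2]
      exact hS k hk' h0
    · by_cases hc2 : k = la
      · subst hc2
        rw [hL2y hk, htakeL2a]
        exact SAy'
      · by_cases hc3 : k = la + 1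
        · subst hc3
          rw [hL2x hk, htakeL2y]
          exact SAx2
        · have hge : la + 2 ≤ k := by omega
          have e1 : L2[k]'hk = L[k]'hk' := by
            show (A ++ y :: x :: B)[k]'hk = (A ++ x :: y :: B)[k]'hk'
            rw [List.getElem_append_right (by omega : la ≤ k),
              List.getElem_append_right (by omega : la ≤ k)]
            obtain ⟨j, hj⟩ : ∃ j, k - la = j + 1 + 1 := ⟨k - la - 2, by omega⟩
            simp only [← hla, hj, List.getElem_cons_succ]
          rw [e1]
          exact (SR.shellAt_congr (fun F => htake2 k hge F)).mp (hS k hk' h0)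
  · -- restriction sets agree
    intro F hF
    rw [SR.Rset_eq, SR.Rset_eq]
    rcases List.mem_append.mp hF with hFA | hFr
    · -- F occurs in A
      have hidx1 : L.idxOf F = A.idxOf F := List.idxOf_append_of_mem hFA
      have hidx2 : L2.idxOf F = A.idxOf F := List.idxOf_append_of_mem hFA
      have hle : A.idxOf F ≤ la := (List.idxOf_lt_length_iff.mpr hFA).le
      rw [hidx1, hidx2, htakeLow _ hle]
    · rcases List.mem_cons.mp hFr with rfl | hFr2
      · -- F = x
        have hidx1 : L.idxOf F = la := by
          rw [hL, List.idxOf_append_of_notMem hxA, List.idxOf_cons_self]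
          omega
        have hidx2 : L2.idxOf F = la + 1 := by
          rw [hL2, List.idxOf_append_of_notMem hxA,
            List.idxOf_cons_ne _ (Ne.symm hxny), List.idxOf_cons_self]
        rw [hidx1, hidx2, htakeLa, htakeL2y]
        ext i
        simp only [Finset.mem_filter, and_congr_right_iff]
        intro hi
        constructor
        · rintro ⟨F', hF', hsub⟩
          exact ⟨F', List.mem_append_left _ hF', hsub⟩
        · rintro ⟨F', hF', hsub⟩
          rcases List.mem_append.mp hF' with hFA' | hFy
          · exact ⟨F', hFA', hsub⟩
          · have hFy' : F' = y := by simpa using hFy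
            subst hFy'
            exact key (F.erase i) hsub
              ⟨F, List.mem_append_right _ (by simp), Finset.erase_subset _ _⟩
      · rcases List.mem_cons.mp hFr2 with rfl | hFB
        · -- F = y
          have hidx1 : L.idxOf F = la + 1 := by
            rw [hL, List.idxOf_append_of_notMem hyA,
              List.idxOf_cons_ne _ hxny, List.idxOf_cons_self]
          have hidx2 : L2.idxOf F = la := by
            rw [hL2, List.idxOf_append_of_notMem hyA, List.idxOf_cons_self]
            omega
          rw [hidx1, hidx2, htakeLx, htakeL2a]
          ext i
          simp only [Finset.mem_filter, and_congr_right_iff]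
          intro hi
          constructor
          · rintro ⟨F', hF', hsub⟩
            rcases List.mem_append.mp hF' with hFA' | hFx
            · exact ⟨F', hFA', hsub⟩
            · exfalso
              have hFx' : F' = x := by simpa using hFx
              rw [hFx'] at hsub
              have hcard : (F.erase i).card + 1 = F.card := Finset.card_erase_add_one hi
              have heq : F.erase i = x := Finset.eq_of_subset_of_card_le hsub (by omega)
              have hsubxy : x ⊆ F := heq ▸ Finset.erase_subset _ _
              exact hxny (hanti x hxL F hyL hsubxy)
          · rintro ⟨F', hF', hsub⟩
            exact ⟨F', List.mem_append_left _ hF', hsub⟩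
        · -- F occurs in B
          have hFnx : F ≠ x := fun he => hxB (he ▸ hFB)
          have hFny : F ≠ y := fun he => hyB (he ▸ hFB)
          have hFnA : F ∉ A := fun ha => hdisj F ha F (by simp [hFB]) rfl
          have hidx1 : L.idxOf F = la + (B.idxOf F + 2) := by
            rw [hL, List.idxOf_append_of_notMem hFnA,
              List.idxOf_cons_ne _ (Ne.symm hFnx), List.idxOf_cons_ne _ (Ne.symm hFny)]
          have hidx2 : L2.idxOf F = la + (B.idxOf F + 2) := by
            rw [hL2, List.idxOf_append_of_notMem hFnA,
              List.idxOf_cons_ne _ (Ne.symm hFny), List.idxOf_cons_ne _ (Ne.symm hFnx)]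
          rw [hidx1, hidx2]
          ext i
          simp only [Finset.mem_filter, and_congr_right_iff]
          intro hi
          constructor
          · rintro ⟨F', hF', hsub⟩
            exact ⟨F', (htake2 _ (by omega) F').mp hF', hsub⟩
          · rintro ⟨F', hF', hsub⟩
            exact ⟨F', (htake2 _ (by omega) F').mpr hF', hsub⟩

theorem SR.main_aux {n : ℕ} : ∀ (M : ℕ) (L : List (Finset (Fin n))), SR.smeasure L ≤ M →
    L.Nodup → (∀ F ∈ L, ∀ G ∈ L, F ⊆ G → F = G) → IsShelling L →
    ∃ L' : List (Finset (Fin n)), L'.Perm L ∧ IsShelling L' ∧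
      L'.Pairwise (fun F G => G.card ≤ F.card) ∧ ∀ F ∈ L, Rset L F = Rset L' F := by
  intro M
  induction M with
  | zero =>
    intro L hM hnd hanti h
    by_cases hs : L.Pairwise (fun F G => G.card ≤ F.card)
    · exact ⟨L, List.Perm.refl L, h, hs, fun F _ => rfl⟩
    · obtain ⟨A, x, y, B, rfl, hxy⟩ := SR.exists_inversion L hs
      have := SR.smeasure_swap A B hxy
      omega
  | succ M ih =>
    intro L hM hnd hanti h
    by_cases hs : L.Pairwise (fun F G => G.card ≤ F.card)
    · exact ⟨L, List.Perm.refl L, h, hs, fun F _ => rfl⟩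
    · obtain ⟨A, x, y, B, rfl, hxy⟩ := SR.exists_inversion L hs
      have hperm : (A ++ y :: x :: B).Perm (A ++ x :: y :: B) :=
        List.Perm.append_left A (List.Perm.swap x y B)
      obtain ⟨hsh2, hR2⟩ := SR.swap hnd hanti h hxy
      have hm2 : SR.smeasure (A ++ y :: x :: B) ≤ M := by
        have := SR.smeasure_swap A B hxy
        omega
      obtain ⟨L', hp, hsh', hsort, hR⟩ := ih (A ++ y :: x :: B) hm2
        (hperm.nodup_iff.mpr hnd)
        (fun F hF G hG hFG => hanti F (hperm.subset hF) G (hperm.subset hG) hFG) hsh2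
      refine ⟨L', hp.trans hperm, hsh', hsort, fun F hF => ?_⟩
      rw [hR2 F hF, hR F (hperm.symm.subset hF)]

theorem shelling_rearrangement {n : ℕ} (L : List (Finset (Fin n))) (hnd : L.Nodup)
    (hanti : ∀ F ∈ L, ∀ G ∈ L, F ⊆ G → F = G) (h : IsShelling L) :
    ∃ L' : List (Finset (Fin n)), L'.Perm L ∧ IsShelling L' ∧
      L'.Pairwise (fun F G => G.card ≤ F.card) ∧
      ∀ F ∈ L, Rset L F = Rset L' F := by
  exact SR.main_aux (SR.smeasure L) L le_rfl hnd hanti h
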